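/- Under randomization of Z, exclusion restriction, and monotonicity Y₀ ≤ Y₁, if P(Y₁ = 1) > P(Y₀ = 1), then the average principal causal effect for the Helpable stratum, E[R₁ − R₀ | Y₀ = 0, Y₁ = 1], equals (E[Y | Z = 1] − E[Y | Z = 0]) / (P(Y₁ = 1) − P(Y₀ = 1)). -/

import Mathlib

open Finset
open scoped Classical

namespace PS

/-- Probability of an event `A` under weight function `p` on a finite sample space. -/
noncomputable def Prob {Ω : Type*} [Fintype Ω] (p : Ω → ℝ) (A : Ω → Prop) : ℝ :=
  ∑ ω ∈ Finset.univ.filter A, p ω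

/-- Conditional probability `P(A | B)`. -/
noncomputable def CProb {Ω : Type*} [Fintype Ω] (p : Ω → ℝ) (A B : Ω → Prop) : ℝ :=
  Prob p (fun ω => A ω ∧ B ω) / Prob p B

/-- Conditional expectation `E[f | B]`. -/
noncomputable def CExp {Ω : Type*} [Fintype Ω] (p : Ω → ℝ) (f : Ω → ℝ) (B : Ω → Prop) : ℝ :=
  (∑ ω ∈ Finset.univ.filter B, p ω * f ω) / Prob p B

/-- Indicator of a Boolean value, as a real number. -/
def ind (b : Bool) : ℝ := if b then 1 else 0

/-- Observed recommendation `R = R_Z`. -/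
def obsR {Ω : Type*} (Z R₀ R₁ : Ω → Bool) (ω : Ω) : Bool := if Z ω then R₁ ω else R₀ ω

/-- Observed outcome `Y = Y_R` (exclusion restriction). -/
def obsY {Ω : Type*} (Rv Y₀ Y₁ : Ω → Bool) (ω : Ω) : Bool := if Rv ω then Y₁ ω else Y₀ ω

/-- `Z` is independent of the vector `(R₀, R₁, Y₀, Y₁)`. -/
def IndepZ {Ω : Type*} [Fintype Ω] (p : Ω → ℝ) (Z R₀ R₁ Y₀ Y₁ : Ω → Bool) : Prop :=
  ∀ z a b c d : Bool,
    Prob p (fun ω => Z ω = z ∧ R₀ ω = a ∧ R₁ ω = b ∧ Y₀ ω = c ∧ Y₁ ω = d) =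
      Prob p (fun ω => Z ω = z) *
        Prob p (fun ω => R₀ ω = a ∧ R₁ ω = b ∧ Y₀ ω = c ∧ Y₁ ω = d)

lemma probfix {Ω : Type*} [Fintype Ω] (p : Ω → ℝ) (A : Ω → Prop) [DecidablePred A] :
    Prob p A = ∑ ω ∈ Finset.univ.filter A, p ω := by
  unfold Prob; congr!

lemma cexpfix {Ω : Type*} [Fintype Ω] (p : Ω → ℝ) (f : Ω → ℝ) (B : Ω → Prop) [DecidablePred B] :
    CExp p f B = (∑ ω ∈ Finset.univ.filter B, p ω * f ω) / Prob p B := by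
  unfold CExp; congr!

lemma fiber {Ω : Type*} [Fintype Ω] (p : Ω → ℝ) (R₀ R₁ Y₀ Y₁ : Ω → Bool) (t : Finset Ω)
    (F : Bool → Bool → Bool → Bool → ℝ) :
    ∑ ω ∈ t, p ω * F (R₀ ω) (R₁ ω) (Y₀ ω) (Y₁ ω) =
      ∑ a : Bool, ∑ b : Bool, ∑ c : Bool, ∑ d : Bool, F a b c d *
        ∑ ω ∈ t.filter (fun ω => R₀ ω = a ∧ R₁ ω = b ∧ Y₀ ω = c ∧ Y₁ ω = d), p ω := by
  classical
  rw [← Finset.sum_fiberwise_of_maps_to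
    (g := fun ω => (R₀ ω, R₁ ω, Y₀ ω, Y₁ ω)) (fun x _ => Finset.mem_univ _)
    (f := fun ω => p ω * F (R₀ ω) (R₁ ω) (Y₀ ω) (Y₁ ω))]
  rw [Fintype.sum_prod_type]
  refine Finset.sum_congr rfl fun a _ => ?_
  rw [Fintype.sum_prod_type]
  refine Finset.sum_congr rfl fun b _ => ?_
  rw [Fintype.sum_prod_type]
  refine Finset.sum_congr rfl fun c _ => ?_
  refine Finset.sum_congr rfl fun d _ => ?_
  rw [Finset.mul_sum]
  refine Finset.sum_congr ?_ fun ω hω => ?_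
  · apply Finset.filter_congr
    intro ω _
    simp [Prod.ext_iff]
  · simp only [Finset.mem_filter, Prod.mk.injEq] at hω
    obtain ⟨_, h1, h2, h3, h4⟩ := hω
    rw [h1, h2, h3, h4, mul_comm]

theorem stmt4 {Ω : Type*} [Fintype Ω] (p : Ω → ℝ) (Z R₀ R₁ Y₀ Y₁ : Ω → Bool)
    (hp : ∀ ω, 0 ≤ p ω) (hsum : ∑ ω, p ω = 1)
    (hZpos : ∀ z : Bool, 0 < Prob p (fun ω => Z ω = z))
    (hindep : IndepZ p Z R₀ R₁ Y₀ Y₁)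
    (hmono : ∀ ω, Y₀ ω = true → Y₁ ω = true)
    (hH : 0 < Prob p (fun ω => Y₀ ω = false ∧ Y₁ ω = true))
    (hgap : Prob p (fun ω => Y₀ ω = true) < Prob p (fun ω => Y₁ ω = true)) :
    CExp p (fun ω => ind (R₁ ω) - ind (R₀ ω)) (fun ω => Y₀ ω = false ∧ Y₁ ω = true) =
      (CExp p (fun ω => ind (obsY (obsR Z R₀ R₁) Y₀ Y₁ ω)) (fun ω => Z ω = true) - CExp p (fun ω => ind (obsY (obsR Z R₀ R₁) Y₀ Y₁ ω)) (fun ω => Z ω = false)) /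
        (Prob p (fun ω => Y₁ ω = true) - Prob p (fun ω => Y₀ ω = true)) := by
  classical
  set s : Bool → Bool → Bool → Bool → ℝ := fun a b c d =>
    Prob p (fun ω => R₀ ω = a ∧ R₁ ω = b ∧ Y₀ ω = c ∧ Y₁ ω = d) with hs
  have hCExpZ : ∀ z : Bool,
      CExp p (fun ω => ind (obsY (obsR Z R₀ R₁) Y₀ Y₁ ω)) (fun ω => Z ω = z) =
        ∑ a : Bool, ∑ b : Bool, ∑ c : Bool, ∑ d : Bool,
          ind (if (if z then b else a) then d else c) * s a b c d := by
    intro z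
    rw [cexpfix]
    have hnum : ∑ ω ∈ Finset.univ.filter (fun ω => Z ω = z),
        p ω * ind (obsY (obsR Z R₀ R₁) Y₀ Y₁ ω)
        = ∑ ω ∈ Finset.univ.filter (fun ω => Z ω = z),
        p ω * ind (if (if z then R₁ ω else R₀ ω) then Y₁ ω else Y₀ ω) := by
      refine Finset.sum_congr rfl fun ω hω => ?_
      simp only [Finset.mem_filter] at hω
      simp [obsY, obsR, hω.2]
    rw [hnum, fiber p R₀ R₁ Y₀ Y₁ _ (fun a b c d => ind (if (if z then b else a) then d else c))]
    have hf : ∀ a b c d : Bool,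
        ∑ ω ∈ (Finset.univ.filter (fun ω => Z ω = z)).filter
          (fun ω => R₀ ω = a ∧ R₁ ω = b ∧ Y₀ ω = c ∧ Y₁ ω = d), p ω
        = Prob p (fun ω => Z ω = z) * s a b c d := by
      intro a b c d
      rw [Finset.filter_filter, ← probfix]
      exact hindep z a b c d
    simp only [hf]
    have hPZ : Prob p (fun ω => Z ω = z) ≠ 0 := (hZpos z).ne'
    field_simp
    simp only [Fintype.sum_bool]
    ring
  have hProb : ∀ G : Bool → Bool → Bool → Bool → Prop,
      Prob p (fun ω => G (R₀ ω) (R₁ ω) (Y₀ ω) (Y₁ ω)) =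
        ∑ a : Bool, ∑ b : Bool, ∑ c : Bool, ∑ d : Bool,
          (if G a b c d then (1:ℝ) else 0) * s a b c d := by
    intro G
    rw [probfix, Finset.sum_filter]
    have key : ∀ ω, (if G (R₀ ω) (R₁ ω) (Y₀ ω) (Y₁ ω) then p ω else 0)
        = p ω * (if G (R₀ ω) (R₁ ω) (Y₀ ω) (Y₁ ω) then (1:ℝ) else 0) := by
      intro ω; split <;> simp
    simp only [key]
    rw [fiber p R₀ R₁ Y₀ Y₁ _ (fun a b c d => if G a b c d then (1:ℝ) else 0)]
    refine Finset.sum_congr rfl fun a _ => Finset.sum_congr rfl fun b _ =>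
      Finset.sum_congr rfl fun c _ => Finset.sum_congr rfl fun d _ => ?_
    rw [← probfix]
  have hPY1 : Prob p (fun ω => Y₁ ω = true) =
      ∑ a : Bool, ∑ b : Bool, ∑ c : Bool, ∑ d : Bool,
        (if d = true then (1:ℝ) else 0) * s a b c d := by
    rw [hProb (fun _ _ _ d => d = true)]; congr!
  have hPY0 : Prob p (fun ω => Y₀ ω = true) =
      ∑ a : Bool, ∑ b : Bool, ∑ c : Bool, ∑ d : Bool,
        (if c = true then (1:ℝ) else 0) * s a b c d := by
    rw [hProb (fun _ _ c _ => c = true)]; congr!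
  have hPH : Prob p (fun ω => Y₀ ω = false ∧ Y₁ ω = true) =
      ∑ a : Bool, ∑ b : Bool, ∑ c : Bool, ∑ d : Bool,
        (if c = false ∧ d = true then (1:ℝ) else 0) * s a b c d := by
    rw [hProb (fun _ _ c d => c = false ∧ d = true)]; congr!
  have hLnum : ∑ ω ∈ Finset.univ.filter (fun ω => Y₀ ω = false ∧ Y₁ ω = true),
      p ω * (ind (R₁ ω) - ind (R₀ ω)) =
      ∑ a : Bool, ∑ b : Bool, ∑ c : Bool, ∑ d : Bool,
        (if c = false ∧ d = true then ind b - ind a else 0) * s a b c d := by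
    rw [Finset.sum_filter]
    have key : ∀ ω, (if Y₀ ω = false ∧ Y₁ ω = true then p ω * (ind (R₁ ω) - ind (R₀ ω)) else 0)
        = p ω * (if Y₀ ω = false ∧ Y₁ ω = true then ind (R₁ ω) - ind (R₀ ω) else 0) := by
      intro ω; split <;> simp
    simp only [key]
    rw [fiber p R₀ R₁ Y₀ Y₁ _
      (fun a b c d => if c = false ∧ d = true then ind b - ind a else 0)]
    refine Finset.sum_congr rfl fun a _ => Finset.sum_congr rfl fun b _ =>
      Finset.sum_congr rfl fun c _ => Finset.sum_congr rfl fun d _ => ?_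
    rw [← probfix]
  have hzero : ∀ a b : Bool, s a b true false = 0 := by
    intro a b
    show Prob p (fun ω => R₀ ω = a ∧ R₁ ω = b ∧ Y₀ ω = true ∧ Y₁ ω = false) = 0
    rw [probfix, Finset.filter_false_of_mem, Finset.sum_empty]
    rintro ω - ⟨-, -, h3, h4⟩
    exact absurd (hmono ω h3) (by simp [h4])
  have hH' : Prob p (fun ω => Y₀ ω = false ∧ Y₁ ω = true) ≠ 0 := hH.ne'
  have hgap' : Prob p (fun ω => Y₁ ω = true) - Prob p (fun ω => Y₀ ω = true) ≠ 0 :=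
    sub_ne_zero.2 hgap.ne'
  rw [cexpfix p (fun ω => ind (R₁ ω) - ind (R₀ ω)) (fun ω => Y₀ ω = false ∧ Y₁ ω = true)]
  rw [hLnum, hCExpZ true, hCExpZ false]
  rw [hPH] at hH' ⊢
  rw [hPY1, hPY0] at hgap' ⊢
  simp only [Fintype.sum_bool, ind] at *
  simp only [hzero] at *
  norm_num at hH' hgap' ⊢
  field_simp
  ring
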